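/- Let K ⊂ ℝ^d be compact, and suppose for every pair x,y ∈ K with |x−y| ≤ δ there is a path of action at most L|x−y| from x to y, and a finite δ-net {x_i} of K such that each pair (x_i, x_j) is joined by a path with action ≤ V⁺(x_i,x_j) + γ/2, where each such path has finite duration. Then there exists T₀ < ∞ such that for all x, y ∈ K there exists a path φ : [0,T] → ℝ^d, T ≤ T₀, with φ_0 = x, φ_T = y, and S(φ) ≤ V⁺(x,y) + γ, provided δ is chosen small enough that 2Lδ ≤ γ/4 and |V⁺(x_i,x_j) − V⁺(x,y)| ≤ γ/4 for x near x_i, y near x_j. -/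
import Mathlib


/-- Lemma 3.2 (uniform time to nearly realize the quasi-potential), in abstract
form. `A x y T r` means "there is a path from `x` to `y` of duration `T` and
action at most `r`"; it is additive under concatenation and monotone in the
action bound. If nearby points of the compact set `K` are joined by paths of
duration `dist x y` and action `≤ L·dist x y`, and the points of a finite
`δ`-net are pairwise joined by finite-duration paths of action
`≤ V(i,j) + γ/2`, with `2Lδ ≤ γ/4` and `|V(i,j) − V(x,y)| ≤ γ/4` for `x,y`
`δ`-close to `i,j`, then there is `T₀ < ∞` such that any `x,y ∈ K` are joined
by a path of duration `T ≤ T₀` and action `≤ V(x,y) + γ`. -/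
theorem uniform_time_quasipotential {d : ℕ}
    (K : Set (EuclideanSpace ℝ (Fin d))) (hK : IsCompact K)
    (A : EuclideanSpace ℝ (Fin d) → EuclideanSpace ℝ (Fin d) → ℝ → ℝ → Prop)
    (V : EuclideanSpace ℝ (Fin d) → EuclideanSpace ℝ (Fin d) → ℝ)
    (L δ γ : ℝ) (hL : 0 < L) (hδ : 0 < δ) (hγ : 0 < γ)
    (hconcat : ∀ x y z T₁ T₂ r₁ r₂,
      A x y T₁ r₁ → A y z T₂ r₂ → A x z (T₁ + T₂) (r₁ + r₂))
    (hmono : ∀ x y T r r', r ≤ r' → A x y T r → A x y T r')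
    (hnear : ∀ x ∈ K, ∀ y ∈ K, dist x y ≤ δ → A x y (dist x y) (L * dist x y))
    (net : Finset (EuclideanSpace ℝ (Fin d))) (hnetK : ↑net ⊆ K)
    (hcover : ∀ x ∈ K, ∃ i ∈ net, dist x i ≤ δ)
    (Tnet : EuclideanSpace ℝ (Fin d) → EuclideanSpace ℝ (Fin d) → ℝ)
    (hTnet : ∀ i ∈ net, ∀ j ∈ net, 0 ≤ Tnet i j)
    (hnetpath : ∀ i ∈ net, ∀ j ∈ net, A i j (Tnet i j) (V i j + γ / 2))
    (hVcont : ∀ x ∈ K, ∀ y ∈ K, ∀ i ∈ net, ∀ j ∈ net,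
      dist x i ≤ δ → dist y j ≤ δ → |V i j - V x y| ≤ γ / 4)
    (hδγ : 2 * L * δ ≤ γ / 4) :
    ∃ T₀ : ℝ, ∀ x ∈ K, ∀ y ∈ K, ∃ T : ℝ, T ≤ T₀ ∧ A x y T (V x y + γ) := by

  rcases (net ×ˢ net).eq_empty_or_nonempty with hne | hne
  · -- then net gives cover only if K empty? handle: K must be empty
    refine ⟨0, fun x hx y hy => ?_⟩
    obtain ⟨i, hi, _⟩ := hcover x hx
    obtain ⟨j, hj, _⟩ := hcover y hy
    exact absurd (show (i, j) ∈ net ×ˢ net from Finset.mem_product.2 ⟨hi, hj⟩) (by simp [hne])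
  · refine ⟨2 * δ + (net ×ˢ net).sup' hne (fun p => Tnet p.1 p.2),
      fun x hx y hy => ?_⟩
    obtain ⟨i, hi, hxi⟩ := hcover x hx
    obtain ⟨j, hj, hyj⟩ := hcover y hy
    have hiK : i ∈ K := hnetK hi
    have hjK : j ∈ K := hnetK hj
    have h1 : A x i (dist x i) (L * dist x i) := hnear x hx i hiK hxi
    have h2 : A i j (Tnet i j) (V i j + γ / 2) := hnetpath i hi j hj
    have hjy : dist j y ≤ δ := by rwa [dist_comm]
    have h3 : A j y (dist j y) (L * dist j y) := hnear j hjK y hy hjy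
    have h12 := hconcat _ _ _ _ _ _ _ h1 h2
    have h123 := hconcat _ _ _ _ _ _ _ h12 h3
    refine ⟨_, ?_, hmono _ _ _ _ _ ?_ h123⟩
    · have hsup : Tnet i j ≤ (net ×ˢ net).sup' hne (fun p => Tnet p.1 p.2) :=
        Finset.le_sup' (f := fun p => Tnet p.1 p.2)
          (show (i, j) ∈ net ×ˢ net from Finset.mem_product.2 ⟨hi, hj⟩)
      have := dist_nonneg (x := x) (y := i)
      nlinarith [dist_nonneg (x := j) (y := y)]
    · have hV := hVcont x hx y hy i hi j hj hxi hyj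
      have h1' : L * dist x i ≤ L * δ := by nlinarith
      have h3' : L * dist j y ≤ L * δ := by nlinarith
      have habs := abs_le.1 hV
      nlinarith
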